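/- (e-BH interpretation of dBH.) With dBH e-values e_j^{dBH} = m·1{p_j ≤ τ̂_j}/(α·R̂_j(p)), the dBH procedure with uniform pruning variables U₁,...,U_m is identical to the e-BH procedure at level α applied to (e₁^{dBH}/U₁, ..., e_m^{dBH}/U_m); in particular, setting all U_j = 1 shows dBH without randomized pruning equals e-BH on (e₁^{dBH},...,e_m^{dBH}). -/

import Mathlib

/-- The e-BH rejection set at level `α` applied to e-values `e : Fin m → ℝ`. -/
noncomputable def eBHSet (m : ℕ) (α : ℝ) (e : Fin m → ℝ) : Finset (Fin m) :=
  let k := sSup {k : ℕ |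
    k ≤ m ∧ k ≤ (Finset.univ.filter (fun j : Fin m => (m : ℝ) / (α * k) ≤ e j)).card}
  if k = 0 then ∅ else Finset.univ.filter (fun j : Fin m => (m : ℝ) / (α * k) ≤ e j)

/-- **e-BH interpretation of dBH.**  With dBH e-values
`e_j^{dBH} = m·1{p_j ≤ τ̂_j}/(α R̂_j)`, the dBH procedure with uniform pruning variables
`U₁,…,U_m` (which returns `{j ∈ R̂⁺ : U_j ≤ r*/R̂_j}` where
`r* = max{r : |{j ∈ R̂⁺ : U_j ≤ r/R̂_j}| ≥ r}` and `R̂⁺ = {j : p_j ≤ τ̂_j}`) coincides with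
the e-BH procedure at level `α` applied to `(e₁^{dBH}/U₁, …, e_m^{dBH}/U_m)`; in
particular, setting all `U_j = 1` shows that dBH without randomized pruning equals e-BH on
`(e₁^{dBH}, …, e_m^{dBH})`. -/
theorem dBH_eBH_equiv
    (m : ℕ) (hm : 0 < m) (α : ℝ) (hα : α ∈ Set.Ioo (0 : ℝ) 1)
    (p τhat Rhat U : Fin m → ℝ)
    (hRhat : ∀ j, 1 ≤ Rhat j)
    (hU : ∀ j, 0 < U j ∧ U j ≤ 1)
    (Rplus : Finset (Fin m))
    (hRplus : Rplus = Finset.univ.filter fun j => p j ≤ τhat j)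
    (rstar : ℕ)
    (hrstar : rstar = sSup {r : ℕ | r ≤ m ∧
      r ≤ (Rplus.filter fun j => U j ≤ (r : ℝ) / Rhat j).card})
    (RdBH : Finset (Fin m))
    (hRdBH : RdBH = Rplus.filter fun j => U j ≤ (rstar : ℝ) / Rhat j)
    (etilde : Fin m → ℝ)
    (hetilde : ∀ j, etilde j =
      (m : ℝ) * (if p j ≤ τhat j then 1 else 0) / (α * Rhat j * U j)) :
    eBHSet m α etilde = RdBH ∧
    ((∀ j, U j = 1) →
      eBHSet m α (fun j => (m : ℝ) * (if p j ≤ τhat j then 1 else 0) / (α * Rhat j))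
        = RdBH) := by
  obtain ⟨hα0, hα1⟩ := hα
  have hmR : (0 : ℝ) < m := by exact_mod_cast hm
  -- filter equality for k ≥ 1
  have hfilt : ∀ k : ℕ, 1 ≤ k →
      (Finset.univ.filter (fun j : Fin m => (m : ℝ) / (α * k) ≤ etilde j))
        = Rplus.filter (fun j => U j ≤ (k : ℝ) / Rhat j) := by
    intro k hk
    ext j
    have hRj : (0 : ℝ) < Rhat j := lt_of_lt_of_le one_pos (hRhat j)
    have hUj := (hU j).1
    have hkR : (0 : ℝ) < k := by exact_mod_cast hk
    simp only [Finset.mem_filter, Finset.mem_univ, true_and, hRplus, hetilde]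
    by_cases hp : p j ≤ τhat j
    · simp only [hp, if_true, mul_one, true_and]
      rw [div_le_div_iff_of_pos_left hmR (by positivity) (by positivity), mul_assoc,
        mul_le_mul_iff_right₀ hα0, le_div_iff₀ hRj, mul_comm]
    · simp only [hp, if_false, mul_zero, zero_div, false_and, iff_false, not_le]
      positivity
  have hsets : {k : ℕ | k ≤ m ∧
      k ≤ (Finset.univ.filter (fun j : Fin m => (m : ℝ) / (α * k) ≤ etilde j)).card}
      = {r : ℕ | r ≤ m ∧ r ≤ (Rplus.filter fun j => U j ≤ (r : ℝ) / Rhat j).card} := by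
    ext n
    rcases Nat.eq_zero_or_pos n with h0 | h1
    · subst h0; simp
    · simp only [Set.mem_setOf_eq, hfilt n h1]
  have hsup : sSup {k : ℕ | k ≤ m ∧
      k ≤ (Finset.univ.filter (fun j : Fin m => (m : ℝ) / (α * k) ≤ etilde j)).card}
      = rstar := by rw [hsets, ← hrstar]
  have hunfold : ∀ e : Fin m → ℝ, eBHSet m α e =
      if sSup {k : ℕ | k ≤ m ∧
          k ≤ (Finset.univ.filter (fun j : Fin m => (m : ℝ) / (α * k) ≤ e j)).card} = 0
      then ∅ else Finset.univ.filter (fun j : Fin m =>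
        (m : ℝ) / (α * (sSup {k : ℕ | k ≤ m ∧
          k ≤ (Finset.univ.filter (fun j : Fin m => (m : ℝ) / (α * k) ≤ e j)).card} : ℕ))
          ≤ e j) := fun e => rfl
  have hmain : eBHSet m α etilde = RdBH := by
    rw [hunfold, hsup]
    by_cases h0 : rstar = 0
    · rw [if_pos h0, hRdBH, h0]
      symm
      rw [Finset.filter_eq_empty_iff]
      intro j _
      simp only [Nat.cast_zero, zero_div]
      exact not_le.mpr (hU j).1
    · rw [if_neg h0, hRdBH, hfilt rstar (Nat.one_le_iff_ne_zero.mpr h0)]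
  refine ⟨hmain, fun hU1 => ?_⟩
  have hfun : (fun j => (m : ℝ) * (if p j ≤ τhat j then 1 else 0) / (α * Rhat j))
      = etilde := funext fun j => by rw [hetilde j, hU1 j, mul_one]
  rw [hfun]
  exact hmain
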